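/- Let 1 ≤ u ≤ v be integers and let j ≥ 1 be a natural number with (j + 1)u ≥ v − 1 (equivalently, j ≥ (v − 1)/u − 1). Then the j-fold sumset satisfies jY(u, v) = [0, jv]. -/

import Mathlib

open Pointwise

/-- `Y u v = [0, u] ∪ [v − u, v] ⊆ ℤ`. -/
noncomputable def Y (u v : ℤ) : Finset ℤ := Finset.Icc 0 u ∪ Finset.Icc (v - u) v

lemma myIcc_add_Icc (a b c d : ℤ) (hab : a ≤ b) (hcd : c ≤ d) :
    Finset.Icc a b + Finset.Icc c d = Finset.Icc (a + c) (b + d) := by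
  ext x
  simp only [Finset.mem_add, Finset.mem_Icc]
  constructor
  · rintro ⟨p, hp, q, hq, rfl⟩; omega
  · rintro ⟨h1, h2⟩
    rcases le_total a (x - d) with h | h
    · exact ⟨x - d, by omega, d, by omega, by ring⟩
    · exact ⟨a, by omega, x - a, by omega, by ring⟩

lemma my_nsmul_Icc (k : ℕ) (a b : ℤ) (hab : a ≤ b) :
    k • Finset.Icc a b = Finset.Icc ((k : ℤ) * a) ((k : ℤ) * b) := by
  induction k with
  | zero => simp; rfl
  | succ n ih =>
    rw [succ_nsmul, ih, myIcc_add_Icc _ _ _ _ (by nlinarith [Int.natCast_nonneg n]) hab]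
    push_cast; ring_nf

lemma my_nsmul_subset (k : ℕ) {s t : Finset ℤ} (h : s ⊆ t) : k • s ⊆ k • t := by
  induction k with
  | zero => simp
  | succ n ih =>
    rw [succ_nsmul, succ_nsmul]
    exact Finset.add_subset_add ih h

theorem jfold_sumset_Y_full (u v : ℤ) (hu : 1 ≤ u) (huv : u ≤ v)
    (j : ℕ) (hj : 1 ≤ j) (hjv : v - 1 ≤ ((j : ℤ) + 1) * u) :
    j • Y u v = Finset.Icc 0 ((j : ℤ) * v) := by
  apply Finset.Subset.antisymm
  · have h1 : Y u v ⊆ Finset.Icc 0 v := by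
      unfold Y
      apply Finset.union_subset <;> apply Finset.Icc_subset_Icc <;> omega
    calc j • Y u v ⊆ j • Finset.Icc 0 v := my_nsmul_subset j h1
      _ = Finset.Icc 0 ((j : ℤ) * v) := by rw [my_nsmul_Icc j 0 v (by omega)]; simp
  · intro n hn
    rw [Finset.mem_Icc] at hn
    -- choose k
    have hjz : (1 : ℤ) ≤ (j : ℤ) := by exact_mod_cast hj
    obtain ⟨k, hkj, hk1, hk2⟩ : ∃ k : ℕ, k ≤ j ∧ (k : ℤ) * (v - u) ≤ n ∧
        n ≤ (k : ℤ) * (v - u) + (j : ℤ) * u := by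
      rcases eq_or_lt_of_le huv with h | h
      · exact ⟨0, by omega, by simp [hn.1], by simp; nlinarith [hn.2]⟩
      · set w := v - u with hw
        have hw1 : 1 ≤ w := by omega
        set k0 := n / w with hk0
        have hk0n : 0 ≤ k0 := Int.ediv_nonneg hn.1 (by omega)
        have hd1 : k0 * w ≤ n := Int.ediv_mul_le n (by omega)
        have hd2 : n < (k0 + 1) * w := by
          have := Int.lt_ediv_add_one_mul_self n hw1
          linarith
        rcases le_total (j : ℤ) k0 with hle | hle
        · refine ⟨j, le_refl _, ?_, by nlinarith⟩
          calc (j : ℤ) * w ≤ k0 * w := by nlinarith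
            _ ≤ n := hd1
        · refine ⟨k0.toNat, ?_, ?_, ?_⟩
          · omega
          · rwa [Int.toNat_of_nonneg hk0n]
          · rw [Int.toNat_of_nonneg hk0n]
            nlinarith
    -- membership
    have hsub1 : Finset.Icc (v - u) v ⊆ Y u v := Finset.subset_union_right
    have hsub2 : Finset.Icc (0 : ℤ) u ⊆ Y u v := Finset.subset_union_left
    have key : n ∈ k • Finset.Icc (v - u) v + (j - k) • Finset.Icc (0 : ℤ) u := by
      rw [my_nsmul_Icc k (v - u) v (by omega), my_nsmul_Icc (j - k) 0 u (by omega),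
        myIcc_add_Icc _ _ _ _ (by nlinarith [Int.natCast_nonneg k]) (by positivity),
        Finset.mem_Icc]
      have : ((j - k : ℕ) : ℤ) = (j : ℤ) - k := by
        push_cast [Nat.cast_sub hkj]; ring
      rw [this]
      constructor
      · linarith
      · nlinarith [hk2]
    have : k • Finset.Icc (v - u) v + (j - k) • Finset.Icc (0 : ℤ) u ⊆ j • Y u v := by
      calc k • Finset.Icc (v - u) v + (j - k) • Finset.Icc (0 : ℤ) u
          ⊆ k • Y u v + (j - k) • Y u v :=
            Finset.add_subset_add (my_nsmul_subset k hsub1) (my_nsmul_subset (j - k) hsub2)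
        _ = j • Y u v := by rw [← add_nsmul, Nat.add_sub_cancel' hkj]
    exact this key
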